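/- Assume $(\varrho_n)_{n \in \mathbb{Z}}$ is summable. Then there exists a non-constant function $u : G_k \to \mathbb{R}$ which is $H_{ij}$-periodic and $p$-harmonic ($\Delta_p u(x) = 0$ for all $x \in G_k$). Thus, in contrast to the case of normal subgroups of finite index, a normal subgroup of infinite index can admit non-constant periodic $p$-harmonic functions. -/

import Mathlib

open scoped BigOperators

noncomputable section

/-- The group representation `G_k` of the Cayley tree of order `k`:
the free product of `k+1` copies of the cyclic group of order two. -/
abbrev G (k : ℕ) : Type := Monoid.CoprodI (fun _ : Fin (k + 1) => Multiplicative (ZMod 2))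

/-- The generators `a_0, ..., a_k` of `G_k`. -/
def gen (k : ℕ) (s : Fin (k + 1)) : G k :=
  Monoid.CoprodI.of (i := s) (Multiplicative.ofAdd (1 : ZMod 2))

/-- `φ_p(t) = |t|^(p-2) t` (real powers). -/
noncomputable def phiP (p t : ℝ) : ℝ := |t| ^ (p - 2) * t

/-- The discrete `p`-Laplacian on the Cayley tree with resistances `r`:
`Δ_p u (x) = ∑_{s=0}^{k} φ_p ((u (x a_s) - u x) / r (x, x a_s))`. -/
noncomputable def pLap (k : ℕ) (p : ℝ) (r : G k × G k → ℝ) (u : G k → ℝ) (x : G k) : ℝ :=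
  ∑ s : Fin (k + 1), phiP p ((u (x * gen k s) - u x) / r (x, x * gen k s))

/-- A function `u : G_k → ℝ` is `H`-periodic if `u (y x) = u x` for all `y ∈ H`, `x ∈ G_k`. -/
def IsPeriodic (k : ℕ) (H : Subgroup (G k)) (u : G k → ℝ) : Prop :=
  ∀ y ∈ H, ∀ x : G k, u (y * x) = u x

/-- The coset index `φ(x) = ρ(x)(0)` associated to a permutation action `ρ` of `G_k` on `ℤ`. -/
def cosetIdx {k : ℕ} (ρ : G k →* Equiv.Perm ℤ) (x : G k) : ℤ := ρ x 0

lemma phiP_zero (p : ℝ) : phiP p 0 = 0 := by simp [phiP]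

lemma phiP_one (p : ℝ) : phiP p 1 = 1 := by simp [phiP]

lemma phiP_neg_one (p : ℝ) : phiP p (-1) = -1 := by simp [phiP]

theorem stmt18 (k : ℕ) (hk : 1 ≤ k) (p : ℝ) (hp1 : 1 < p)
    (r : G k × G k → ℝ) (hr_symm : ∀ x y : G k, r (x, y) = r (y, x)) (hr_pos : ∀ x y : G k, 0 < r (x, y))
    (i j : Fin (k + 1)) (hij : i ≠ j)
    (ρ : G k →* Equiv.Perm ℤ)
    (hρi : ∀ n : ℤ, ρ (gen k i) n = 1 - n)
    (hρj : ∀ n : ℤ, ρ (gen k j) n = -1 - n)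
    (hρs : ∀ s : Fin (k + 1), s ≠ i → s ≠ j → ρ (gen k s) = 1)
    (f : G k →* G k)
    (hfi : f (gen k i) = gen k i) (hfj : f (gen k j) = gen k j)
    (hfs : ∀ s : Fin (k + 1), s ≠ i → s ≠ j → f (gen k s) = 1)
    (ϱ : ℤ → ℝ) (hϱ_pos : ∀ n : ℤ, 0 < ϱ n)
    (hrϱ : ∀ x y : G k, cosetIdx ρ y = cosetIdx ρ x + 1 → r (x, y) = ϱ (cosetIdx ρ x))
    (hϱ_sum : Summable ϱ) :
    ∃ u : G k → ℝ, (∃ x y : G k, u x ≠ u y) ∧ IsPeriodic k f.ker u ∧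
      ∀ x : G k, pLap k p r u x = 0 := by
  classical
  -- the "potential" F with F (n+1) - F n = ϱ n
  set F : ℤ → ℝ := fun n => ∑' m : ℤ, Set.indicator {m : ℤ | m < n} ϱ m with hFdef
  have hSum : ∀ n : ℤ, Summable (Set.indicator {m : ℤ | m < n} ϱ) :=
    fun n => hϱ_sum.indicator _
  have hFstep : ∀ n : ℤ, F (n + 1) - F n = ϱ n := by
    intro n
    rw [hFdef]
    rw [← Summable.tsum_sub (hSum (n + 1)) (hSum n)]
    have hpt : ∀ m : ℤ, Set.indicator {m : ℤ | m < n + 1} ϱ m -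
        Set.indicator {m : ℤ | m < n} ϱ m = if m = n then ϱ n else 0 := by
      intro m
      simp only [Set.indicator_apply, Set.mem_setOf_eq]
      rcases lt_trichotomy m n with h | h | h
      · rw [if_pos (by omega), if_pos h, if_neg (by omega)]; ring
      · subst h; rw [if_pos (by omega), if_neg (by omega), if_pos rfl]; ring
      · rw [if_neg (by omega), if_neg (by omega), if_neg (by omega)]; ring
    simp_rw [hpt]
    exact tsum_ite_eq n (fun _ => ϱ n)
  have hgen_cases : ∀ m : Multiplicative (ZMod 2), m = 1 ∨ m = Multiplicative.ofAdd 1 := by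
    decide
  -- ρ factors through f
  have hρf : ∀ x : G k, ρ (f x) = ρ x := by
    have hcomp : ρ.comp f = ρ := by
      apply Monoid.CoprodI.ext_hom
      intro s
      refine MonoidHom.ext fun m => Equiv.ext fun n => ?_
      rcases hgen_cases m with rfl | rfl
      · simp
      · show ρ (f (gen k s)) n = ρ (gen k s) n
        by_cases hsi : s = i
        · rw [show gen k s = gen k i by rw [hsi], hfi]
        by_cases hsj : s = j
        · rw [show gen k s = gen k j by rw [hsj], hfj]
        rw [hfs s hsi hsj, map_one, hρs s hsi hsj]
    intro x
    exact DFunLike.congr_fun hcomp x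
  -- every ρ x is an affine map of ℤ
  have haff : ∀ x : G k, ∃ ε c : ℤ, (ε = 1 ∨ ε = -1) ∧ ∀ m : ℤ, ρ x m = ε * m + c := by
    intro x
    induction x using Monoid.CoprodI.induction_on with
    | one => exact ⟨1, 0, Or.inl rfl, by simp⟩
    | of s m =>
      rcases hgen_cases m with rfl | rfl
      · exact ⟨1, 0, Or.inl rfl, by simp⟩
      · have hgs : (Monoid.CoprodI.of (i := s) (Multiplicative.ofAdd (1 : ZMod 2)) : G k)
            = gen k s := rfl
        rw [hgs]
        by_cases hsi : s = i
        · exact ⟨-1, 1, Or.inr rfl, fun n => by rw [hsi, hρi]; ring⟩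
        by_cases hsj : s = j
        · exact ⟨-1, -1, Or.inr rfl, fun n => by rw [hsj, hρj]; ring⟩
        · exact ⟨1, 0, Or.inl rfl, fun n => by rw [hρs s hsi hsj]; simp⟩
    | mul x y hx hy =>
      obtain ⟨ε₁, c₁, h₁, hx⟩ := hx
      obtain ⟨ε₂, c₂, h₂, hy⟩ := hy
      refine ⟨ε₁ * ε₂, ε₁ * c₂ + c₁, ?_, fun m => ?_⟩
      · rcases h₁ with rfl | rfl <;> rcases h₂ with rfl | rfl <;> simp
      · rw [map_mul, Equiv.Perm.mul_apply, hy, hx]; ring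
  refine ⟨fun x => F (cosetIdx ρ x), ⟨gen k i, 1, ?_⟩, ?_, ?_⟩
  · -- nonconstant
    have h1 : cosetIdx ρ (gen k i) = 1 := by
      simp [cosetIdx, hρi]
    have h0 : cosetIdx ρ (1 : G k) = 0 := by simp [cosetIdx]
    show F (cosetIdx ρ (gen k i)) ≠ F (cosetIdx ρ 1)
    rw [h1, h0]
    have hs := hFstep 0
    rw [zero_add] at hs
    intro h
    rw [h, sub_self] at hs
    exact absurd hs.symm (hϱ_pos 0).ne'
  · -- periodicity
    intro y hy x
    have hy1 : f y = 1 := hy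
    have : ρ y = 1 := by rw [← hρf y, hy1, map_one]
    have hcx : cosetIdx ρ (y * x) = cosetIdx ρ x := by
      simp [cosetIdx, map_mul, Equiv.Perm.mul_apply, this]
    show F (cosetIdx ρ (y * x)) = F (cosetIdx ρ x)
    rw [hcx]
  · -- harmonicity
    intro x
    obtain ⟨ε, c, hε, hx⟩ := haff x
    have hc : cosetIdx ρ x = c := by rw [cosetIdx, hx 0]; ring
    have hmul : ∀ s : Fin (k + 1), cosetIdx ρ (x * gen k s) = ε * (ρ (gen k s) 0) + c := by
      intro s
      rw [cosetIdx, map_mul, Equiv.Perm.mul_apply, hx]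
    have hci : cosetIdx ρ (x * gen k i) = ε + c := by rw [hmul i, hρi]; ring
    have hcj : cosetIdx ρ (x * gen k j) = -ε + c := by rw [hmul j, hρj]; ring
    have hterm0 : ∀ s : Fin (k + 1), s ≠ i → s ≠ j →
        phiP p ((F (cosetIdx ρ (x * gen k s)) - F (cosetIdx ρ x)) / r (x, x * gen k s)) = 0 := by
      intro s hsi hsj
      have : cosetIdx ρ (x * gen k s) = cosetIdx ρ x := by
        rw [hmul s, hρs s hsi hsj, hc]; simp
      rw [this]
      simp [phiP_zero]
    -- reduce the sum to the pair {i, j}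
    show (∑ s : Fin (k + 1),
      phiP p ((F (cosetIdx ρ (x * gen k s)) - F (cosetIdx ρ x)) / r (x, x * gen k s))) = 0
    rw [← Finset.sum_subset (Finset.subset_univ ({i, j} : Finset (Fin (k + 1))))
      (fun s _ hs => by
        simp only [Finset.mem_insert, Finset.mem_singleton, not_or] at hs
        exact hterm0 s hs.1 hs.2)]
    rw [Finset.sum_pair hij]
    rcases hε with rfl | rfl
    · -- ε = 1 : neighbor i is "up", neighbor j is "down"
      have hri : r (x, x * gen k i) = ϱ c := by
        rw [← hc]; exact hrϱ x _ (by rw [hci, hc]; ring)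
      have hrj : r (x, x * gen k j) = ϱ (c - 1) := by
        rw [hr_symm]
        have := hrϱ (x * gen k j) x (by rw [hcj, hc]; ring)
        rw [this, hcj, show (-1:ℤ) + c = c - 1 by ring]
      have hdi : F (cosetIdx ρ (x * gen k i)) - F (cosetIdx ρ x) = ϱ c := by
        rw [hci, hc, show (1 : ℤ) + c = c + 1 by ring]; exact hFstep c
      have hdj : F (cosetIdx ρ (x * gen k j)) - F (cosetIdx ρ x) = -ϱ (c - 1) := by
        rw [hcj, hc, show (-1 : ℤ) + c = c - 1 by ring]
        have := hFstep (c - 1)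
        rw [show c - 1 + 1 = c by ring] at this
        linarith
      rw [hri, hrj, hdi, hdj, div_self (hϱ_pos c).ne',
        show -ϱ (c - 1) / ϱ (c - 1) = -1 by rw [neg_div, div_self (hϱ_pos (c - 1)).ne'],
        phiP_one, phiP_neg_one]
      ring
    · -- ε = -1 : neighbor i is "down", neighbor j is "up"
      have hrj : r (x, x * gen k j) = ϱ c := by
        rw [← hc]; exact hrϱ x _ (by rw [hcj, hc]; ring)
      have hri : r (x, x * gen k i) = ϱ (c - 1) := by
        rw [hr_symm]
        have := hrϱ (x * gen k i) x (by rw [hci, hc]; ring)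
        rw [this, hci, show (-1:ℤ) + c = c - 1 by ring]
      have hdj : F (cosetIdx ρ (x * gen k j)) - F (cosetIdx ρ x) = ϱ c := by
        rw [hcj, hc, show -(-1 : ℤ) + c = c + 1 by ring]; exact hFstep c
      have hdi : F (cosetIdx ρ (x * gen k i)) - F (cosetIdx ρ x) = -ϱ (c - 1) := by
        rw [hci, hc, show (-1 : ℤ) + c = c - 1 by ring]
        have := hFstep (c - 1)
        rw [show c - 1 + 1 = c by ring] at this
        linarith
      rw [hri, hrj, hdi, hdj, div_self (hϱ_pos c).ne',
        show -ϱ (c - 1) / ϱ (c - 1) = -1 by rw [neg_div, div_self (hϱ_pos (c - 1)).ne'],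
        phiP_one, phiP_neg_one]
      ring
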